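/- Under the initialized feedback coding scheme 𝕂, set α_i = I_m − A_u^{−(i+1)} B_u C_u A_u^{i} ∈ ℝ^{m×m} and β_i = A_u^{−(i+1)} B_u ∈ ℝ^m for i ≥ m+1, and let w_1^m = (w(1), …, w(m))ᵀ ∈ ℝ^m. Then for every k ≥ m: x̂_{u0}(k) − x_{u0} = (α_k α_{k−1} ⋯ α_{m+1}) · A_u^{−(m+1)} w_1^m + Σ_{i=m+1}^{k} (α_k α_{k−1} ⋯ α_{i+1}) · β_i · (w(i) − C_s x_s(i)), where matrix products are ordered with larger indices on the left and the empty product equals I_m. -/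

import Mathlib

open Matrix

lemma vmv_mulVec {n : Type*} [Fintype n] (w v u : n → ℝ) :
    vecMulVec w v *ᵥ u = (v ⬝ᵥ u) • w := by
  ext i
  simp [vecMulVec, mulVec, dotProduct, Finset.mul_sum, mul_assoc, mul_comm, mul_left_comm]

/-- Ordered product `α_k · α_{k−1} ⋯ α_{lo+1}` (larger indices on the left; the empty
product, when `k ≤ lo`, equals the identity). -/
noncomputable def leftProd {n : ℕ} (α : ℕ → Matrix (Fin n) (Fin n) ℝ) (lo k : ℕ) :
    Matrix (Fin n) (Fin n) ℝ :=
  ((List.range' (lo + 1) (k - lo)).reverse.map α).prod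

lemma leftProd_le {n : ℕ} (α : ℕ → Matrix (Fin n) (Fin n) ℝ) {lo k : ℕ} (h : k ≤ lo) :
    leftProd α lo k = 1 := by
  simp [leftProd, Nat.sub_eq_zero_of_le h]

lemma leftProd_succ {n : ℕ} (α : ℕ → Matrix (Fin n) (Fin n) ℝ) {lo k : ℕ} (h : lo ≤ k) :
    leftProd α lo (k + 1) = α (k + 1) * leftProd α lo k := by
  have h1 : k + 1 - lo = (k - lo) + 1 := by omega
  have h2 : lo + 1 + (k - lo) = k + 1 := by omega
  rw [leftProd, h1, List.range'_concat, List.reverse_append]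
  simp only [one_mul, h2]
  simp [leftProd]

theorem estimate_error_explicit (m p : ℕ) (hm : 1 ≤ m)
    (A_u : Matrix (Fin m) (Fin m) ℝ) (hA : IsUnit A_u.det)
    (A_s : Matrix (Fin p) (Fin p) ℝ)
    (B_u : Fin m → ℝ) (B_s : Fin p → ℝ) (C_u : Fin m → ℝ) (C_s : Fin p → ℝ)
    (x0 : Fin m → ℝ) (w : ℕ → ℝ)
    (u y : ℕ → ℝ) (xs : ℕ → Fin p → ℝ) (xhat : ℕ → Fin m → ℝ)
    (xhat0 : ℕ → Fin m → ℝ)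
    (hy : ∀ k, y k = u k + w k)
    (hu_init : ∀ i : Fin m, u ((i : ℕ) + 1) = (A_u ^ (m + 1) *ᵥ x0) i)
    (hxhat_init : xhat (m + 1) = fun i : Fin m => y ((i : ℕ) + 1))
    (hxs_init : xs (m + 1) = 0)
    (hxs : ∀ k, m + 1 ≤ k → xs (k + 1) = A_s *ᵥ xs k + y k • B_s)
    (hxhat : ∀ k, m + 1 ≤ k → xhat (k + 1) = A_u *ᵥ xhat k + y k • B_u)
    (hu : ∀ k, m + 1 ≤ k →
      u k = C_u ⬝ᵥ (A_u ^ k *ᵥ x0) - C_s ⬝ᵥ xs k - C_u ⬝ᵥ xhat k)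
    (hxhat0 : ∀ k, m ≤ k → xhat0 k = (A_u ^ (k + 1))⁻¹ *ᵥ xhat (k + 1)) :
    ∀ k, m ≤ k →
      xhat0 k - x0 =
        leftProd (fun i => (1 : Matrix (Fin m) (Fin m) ℝ)
            - (A_u ^ (i + 1))⁻¹ * vecMulVec B_u C_u * A_u ^ i) m k
          *ᵥ ((A_u ^ (m + 1))⁻¹ *ᵥ fun i : Fin m => w ((i : ℕ) + 1))
        + ∑ i ∈ Finset.Icc (m + 1) k,
            (w i - C_s ⬝ᵥ xs i) •
              (leftProd (fun j => (1 : Matrix (Fin m) (Fin m) ℝ)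
                  - (A_u ^ (j + 1))⁻¹ * vecMulVec B_u C_u * A_u ^ j) i k
                *ᵥ ((A_u ^ (i + 1))⁻¹ *ᵥ B_u)) := by
  set α : ℕ → Matrix (Fin m) (Fin m) ℝ := fun i =>
    (1 : Matrix (Fin m) (Fin m) ℝ) - (A_u ^ (i + 1))⁻¹ * vecMulVec B_u C_u * A_u ^ i with hαdef
  have hdet : ∀ n : ℕ, IsUnit (A_u ^ n).det := fun n => by
    rw [Matrix.det_pow]; exact hA.pow n
  have hinv : ∀ (n : ℕ) (v : Fin m → ℝ), (A_u ^ n)⁻¹ *ᵥ (A_u ^ n *ᵥ v) = v := fun n v => by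
    rw [mulVec_mulVec, Matrix.nonsing_inv_mul _ (hdet n), one_mulVec]
  have hinv' : ∀ (n : ℕ) (v : Fin m → ℝ), A_u ^ n *ᵥ ((A_u ^ n)⁻¹ *ᵥ v) = v := fun n v => by
    rw [mulVec_mulVec, Matrix.mul_nonsing_inv _ (hdet n), one_mulVec]
  have hstep : ∀ (j : ℕ) (v : Fin m → ℝ),
      (A_u ^ (j + 1))⁻¹ *ᵥ (A_u *ᵥ v) = (A_u ^ j)⁻¹ *ᵥ v := fun j v => by
    have h : (A_u ^ (j + 1))⁻¹ * A_u = (A_u ^ j)⁻¹ := by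
      rw [pow_succ', Matrix.mul_inv_rev, Matrix.mul_assoc, Matrix.nonsing_inv_mul _ hA,
        Matrix.mul_one]
    rw [mulVec_mulVec, h]
  intro k hk
  induction k, hk using Nat.le_induction with
  | base =>
      have hxh : xhat (m + 1) = A_u ^ (m + 1) *ᵥ x0 + fun i : Fin m => w ((i : ℕ) + 1) := by
        rw [hxhat_init]; funext i; simp [hy, hu_init i]
      rw [hxhat0 m le_rfl, hxh, mulVec_add, hinv, leftProd_le _ le_rfl, one_mulVec,
        Finset.Icc_eq_empty (by omega), Finset.sum_empty, add_zero]
      abel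
  | succ k hk ih =>
      -- recursion for the error
      have hx : xhat (k + 1) = A_u ^ (k + 1) *ᵥ xhat0 k := by
        rw [hxhat0 k hk, hinv']
      have hy1 : y (k + 1) = (w (k + 1) - C_s ⬝ᵥ xs (k + 1))
          - C_u ⬝ᵥ (A_u ^ (k + 1) *ᵥ (xhat0 k - x0)) := by
        rw [hy, hu (k + 1) (by omega), hx, mulVec_sub, dotProduct_sub]
        ring
      have hrec : xhat0 (k + 1) - x0 = α (k + 1) *ᵥ (xhat0 k - x0)
          + (w (k + 1) - C_s ⬝ᵥ xs (k + 1)) • ((A_u ^ (k + 1 + 1))⁻¹ *ᵥ B_u) := by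
        have h1 : xhat0 (k + 1) = xhat0 k + y (k + 1) • ((A_u ^ (k + 2))⁻¹ *ᵥ B_u) := by
          rw [hxhat0 (k + 1) (by omega), hxhat (k + 1) (by omega), mulVec_add, mulVec_smul,
            show k + 1 + 1 = (k + 1) + 1 from rfl, hstep (k + 1) (xhat (k + 1)),
            ← hxhat0 k hk]
        rw [h1, hy1]
        have ha1 : α (k + 1) *ᵥ (xhat0 k - x0) = (xhat0 k - x0)
            - (C_u ⬝ᵥ (A_u ^ (k + 1) *ᵥ (xhat0 k - x0))) • ((A_u ^ (k + 2))⁻¹ *ᵥ B_u) := by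
          rw [hαdef]
          simp only [sub_mulVec, one_mulVec, Matrix.mul_assoc, ← mulVec_mulVec]
          rw [vmv_mulVec, mulVec_smul]
        rw [ha1]
        module
      rw [hrec, ih, mulVec_add]
      rw [leftProd_succ _ hk, Finset.sum_Icc_succ_top (show m + 1 ≤ k + 1 by omega),
        leftProd_le _ le_rfl, one_mulVec]
      have hsum : α (k + 1) *ᵥ (∑ i ∈ Finset.Icc (m + 1) k,
            (w i - C_s ⬝ᵥ xs i) • (leftProd α i k *ᵥ ((A_u ^ (i + 1))⁻¹ *ᵥ B_u)))
          = ∑ i ∈ Finset.Icc (m + 1) k,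
            (w i - C_s ⬝ᵥ xs i) • (leftProd α i (k + 1) *ᵥ ((A_u ^ (i + 1))⁻¹ *ᵥ B_u)) := by
        simp only [← mulVecLin_apply, map_sum, _root_.map_smul]
        refine Finset.sum_congr rfl fun i hi => ?_
        rw [leftProd_succ _ (Finset.mem_Icc.mp hi).2]
        simp [mulVecLin_apply, mulVec_mulVec]
      rw [hsum, ← mulVec_mulVec, add_assoc]
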